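/- arXiv:2411.16294 — 4 statements merged into one kernel-verified Lean document; each statement's English description precedes it below -/
import Mathlib

section
/- Let φ₁, …, φ_D be real numbers and define Q₁(z) = ∏_{j=1}^{D} (z − e^{2πiφ_j}). Then |∑_{j=1}^{D} e^{2πiφ_j}| ≤ 2 ∫₀¹ |log|Q₁(e^{2πiθ})|| dθ. -/
open Real MeasureTheory Filter Topology Set

noncomputable def eC (t : ℝ) : ℂ := Complex.exp (2 * Real.pi * Complex.I * t)

lemma eC_def (t : ℝ) : Complex.exp (2 * Real.pi * Complex.I * t) = eC t := rfl

lemma eC_eq (t : ℝ) : eC t = Complex.exp (((2 * π * t : ℝ) : ℂ) * Complex.I) := by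
  rw [eC]; push_cast; ring_nf

lemma eC_abs (t : ℝ) : ‖eC t‖ = 1 := by
  rw [eC_eq]; exact Complex.norm_exp_ofReal_mul_I _

lemma eC_add (s t : ℝ) : eC (s + t) = eC s * eC t := by
  rw [eC, eC, eC, ← Complex.exp_add]; push_cast; ring_nf

lemma eC_one : eC 1 = 1 := by
  rw [eC]; push_cast; rw [mul_one]; exact Complex.exp_two_pi_mul_I

lemma eC_periodic : Function.Periodic eC 1 := by
  intro t; rw [eC_add, eC_one, mul_one]

lemma continuous_eC : Continuous eC :=
  Complex.continuous_exp.comp (continuous_const.mul Complex.continuous_ofReal)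

lemma hasDerivAt_eC (t : ℝ) : HasDerivAt eC (2 * π * Complex.I * eC t) t := by
  have h1 : HasDerivAt (fun s : ℝ => (s : ℂ)) 1 t := by
    simpa using (hasDerivAt_id t).ofReal_comp
  have h2 := (h1.const_mul ((2 : ℂ) * Real.pi * Complex.I)).cexp
  simp only [mul_one] at h2
  convert h2 using 1
  · rfl
  rw [eC]; ring

lemma abs_eC_sub_one {t : ℝ} (h0 : 0 ≤ t) (h1 : t ≤ 1) :
    ‖eC t - 1‖ = 2 * Real.sin (π * t) := by
  have key : eC t - 1 =
      Complex.exp (↑π * ↑t * Complex.I) * (2 * Complex.I * Complex.sin (↑π * ↑t)) := by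
    rw [Complex.sin]
    have e1 : Complex.exp (↑π * ↑t * Complex.I) * Complex.exp (↑π * ↑t * Complex.I) = eC t := by
      rw [← Complex.exp_add, eC]; push_cast; ring_nf
    have e2 : Complex.exp (↑π * ↑t * Complex.I) * Complex.exp (-(↑π * ↑t) * Complex.I) = 1 := by
      rw [← Complex.exp_add, ← Complex.exp_zero]; congr 1; ring
    linear_combination (-1 : ℂ) * e1 + e2 + (Complex.exp (↑π * ↑t * Complex.I) ^ 2 -
      Complex.exp (↑π * ↑t * Complex.I) * Complex.exp (-(↑π * ↑t) * Complex.I)) * Complex.I_sq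
  rw [key, norm_mul, norm_mul, norm_mul]
  have ha : ‖Complex.exp (↑π * ↑t * Complex.I)‖ = 1 := by
    rw [show (↑π * ↑t * Complex.I : ℂ) = ((π * t : ℝ) : ℂ) * Complex.I by push_cast; ring]
    exact Complex.norm_exp_ofReal_mul_I _
  have hb : Complex.sin (↑π * ↑t) = ((Real.sin (π * t) : ℝ) : ℂ) := by
    rw [show ((↑π * ↑t : ℂ)) = ((π * t : ℝ) : ℂ) by push_cast; ring, Complex.ofReal_sin]
  rw [ha, hb, one_mul, Complex.norm_I, Complex.norm_real, Real.norm_eq_abs,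
    abs_of_nonneg (Real.sin_nonneg_of_nonneg_of_le_pi (by positivity) (by nlinarith [Real.pi_pos]))]
  norm_num

lemma eC_sub_eq (φ t : ℝ) : eC t - eC φ = eC φ * (eC (t - φ) - 1) := by
  rw [mul_sub, ← eC_add, mul_one, add_sub_cancel]

lemma abs_eC_sub {φ t : ℝ} (h0 : φ ≤ t) (h1 : t ≤ φ + 1) :
    ‖eC t - eC φ‖ = 2 * Real.sin (π * (t - φ)) := by
  rw [eC_sub_eq, norm_mul, eC_abs, one_mul]
  exact abs_eC_sub_one (by linarith) (by linarith)

lemma sin_pi_mul_lb {x : ℝ} (h0 : 0 ≤ x) (h1 : x ≤ 1) : x * (1 - x) ≤ Real.sin (π * x) := by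
  rcases le_total x (1/2) with h | h
  · have h2 := Real.mul_le_sin (x := π * x) (by positivity) (by nlinarith [Real.pi_pos])
    have h3 : 2 / π * (π * x) = 2 * x := by field_simp
    nlinarith
  · have h2 : Real.sin (π * x) = Real.sin (π * (1 - x)) := by
      rw [show π * (1 - x) = π - π * x by ring, Real.sin_pi_sub]
    have h4 := Real.mul_le_sin (x := π * (1 - x)) (by nlinarith [Real.pi_pos])
      (by nlinarith [Real.pi_pos])
    have h3 : 2 / π * (π * (1 - x)) = 2 * (1 - x) := by field_simp
    nlinarith

lemma eC_sq (t : ℝ) :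
    eC t = (↑(Real.cos (π * t)) + ↑(Real.sin (π * t)) * Complex.I) ^ 2 := by
  have h : eC t = Complex.exp (((π * t : ℝ) : ℂ) * Complex.I) ^ 2 := by
    rw [sq, ← Complex.exp_add, eC]; push_cast; ring_nf
  rw [h, Complex.exp_mul_I, ← Complex.ofReal_cos, ← Complex.ofReal_sin]

lemma integrableOn_abs_log : IntegrableOn (fun x => |Real.log x|) (Ioc (0:ℝ) 1) := by
  have hg : IntegrableOn (fun x : ℝ => 2 * x ^ (-(1/2) : ℝ)) (Ioc (0:ℝ) 1) := by
    have h := (intervalIntegral.intervalIntegrable_rpow' (a := 0) (b := 1)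
      (by norm_num : (-1 : ℝ) < -(1/2))).const_mul 2
    rwa [intervalIntegrable_iff_integrableOn_Ioc_of_le zero_le_one] at h
  refine hg.integrable.mono' (Real.measurable_log.abs.aestronglyMeasurable) ?_
  filter_upwards [ae_restrict_mem measurableSet_Ioc] with x hx
  obtain ⟨hx0, hx1⟩ := hx
  have hr : (0:ℝ) < x ^ (-(1/2) : ℝ) := Real.rpow_pos_of_pos hx0 _
  rw [Real.norm_eq_abs, abs_abs, abs_of_nonpos (Real.log_nonpos hx0.le hx1)]
  have h1 : Real.log (x ^ (-(1/2) : ℝ)) = (-(1/2)) * Real.log x := Real.log_rpow hx0 _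
  have h2 : Real.log (x ^ (-(1/2) : ℝ)) ≤ x ^ (-(1/2) : ℝ) - 1 :=
    Real.log_le_sub_one_of_pos hr
  nlinarith

lemma intervalIntegrable_abs_log : IntervalIntegrable (fun x => |Real.log x|) volume 0 1 := by
  rw [intervalIntegrable_iff_integrableOn_Ioc_of_le zero_le_one]
  exact integrableOn_abs_log

lemma integrableOn_g : IntegrableOn
    (fun x => Real.log 2 + (|Real.log x| + |Real.log (1 - x)|)) (Ioc (0:ℝ) 1) := by
  have h2 : IntervalIntegrable (fun x => |Real.log (1 - x)|) volume 0 1 := by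
    have := (intervalIntegrable_abs_log.comp_sub_left 1).symm
    norm_num at this
    exact this
  have h3 : IntegrableOn (fun x => |Real.log (1 - x)|) (Ioc (0:ℝ) 1) := by
    rwa [intervalIntegrable_iff_integrableOn_Ioc_of_le zero_le_one] at h2
  exact (integrableOn_const measure_Ioc_lt_top.ne).add
    (integrableOn_abs_log.add h3)

lemma intInt_log_sin :
    IntervalIntegrable (fun t => Real.log (2 * Real.sin (π * t))) volume 0 1 := by
  rw [intervalIntegrable_iff_integrableOn_Ioc_of_le zero_le_one]
  have hm : Measurable fun t : ℝ => 2 * Real.sin (π * t) := by fun_prop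
  refine integrableOn_g.integrable.mono' ((Real.measurable_log.comp hm).aestronglyMeasurable) ?_
  filter_upwards [ae_restrict_mem measurableSet_Ioc] with x hx
  obtain ⟨hx0, hx1⟩ := hx
  rcases eq_or_lt_of_le hx1 with h1 | h1
  · subst h1
    norm_num [Real.sin_pi, Real.log_zero, Real.log_one]
    exact Real.log_nonneg one_le_two
  · have hs : 0 < Real.sin (π * x) := Real.sin_pos_of_pos_of_lt_pi (by positivity)
      (by nlinarith [Real.pi_pos])
    have hlb : x * (1 - x) ≤ Real.sin (π * x) := sin_pi_mul_lb hx0.le hx1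
    have hsle : Real.sin (π * x) ≤ 1 := Real.sin_le_one _
    rw [Real.norm_eq_abs, Real.log_mul two_ne_zero hs.ne']
    have hx1' : (0:ℝ) < 1 - x := by linarith
    have h2 : |Real.log (Real.sin (π * x))| ≤ |Real.log x| + |Real.log (1 - x)| := by
      rw [abs_of_nonpos (Real.log_nonpos hs.le hsle),
        abs_of_nonpos (Real.log_nonpos hx0.le hx1),
        abs_of_nonpos (Real.log_nonpos hx1'.le (by linarith))]
      have h3 : Real.log (x * (1 - x)) ≤ Real.log (Real.sin (π * x)) :=
        Real.log_le_log (by positivity) hlb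
      rw [Real.log_mul hx0.ne' hx1'.ne'] at h3
      linarith
    calc |Real.log 2 + Real.log (Real.sin (π * x))|
        ≤ |Real.log 2| + |Real.log (Real.sin (π * x))| := abs_add_le _ _
      _ ≤ Real.log 2 + (|Real.log x| + |Real.log (1 - x)|) := by
          rw [abs_of_nonneg (Real.log_nonneg one_le_two)]; linarith

noncomputable def Gfun (t : ℝ) : ℂ :=
  Complex.I / (2 * π) * ((1 - eC t) * (Real.log (Real.sin (π * t)) : ℂ)
    - eC t * (Real.log 2 : ℂ)) + Complex.I / (4 * π) * eC t - (t : ℂ) / 2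

lemma expand_ident (P e L M s c : ℂ) (hP : P ≠ 0) (hs : s ≠ 0)
    (hk : Complex.I * c * (1 - e) = s * (1 + e)) :
    (M + L) * e = Complex.I / (2 * P) * ((-(2 * P * Complex.I * e)) * L
      + (1 - e) * (s⁻¹ * (c * P)) - (2 * P * Complex.I * e) * M)
      + Complex.I / (4 * P) * (2 * P * Complex.I * e) - 1 / 2 := by
  field_simp
  linear_combination (-4)*hk + (8*s*(M+L)*e - 4*e*s)*Complex.I_sq

lemma key_ident (s c : ℂ) (hsc : s ^ 2 + c ^ 2 = 1) :
    Complex.I * c * (1 - (c + s * Complex.I) ^ 2) = s * (1 + (c + s * Complex.I) ^ 2) := by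
  linear_combination (-2 * s * c ^ 2 - s ^ 2 * c * Complex.I - s ^ 3) * Complex.I_sq +
    (s - Complex.I * c) * hsc

lemma Gfun_deriv {t : ℝ} (h0 : 0 < t) (h1 : t < 1) :
    HasDerivAt Gfun ((Real.log (2 * Real.sin (π * t)) : ℂ) * eC t) t := by
  have hs : 0 < Real.sin (π * t) := Real.sin_pos_of_pos_of_lt_pi (by positivity)
    (by nlinarith [Real.pi_pos])
  have hE := hasDerivAt_eC t
  have hlin : HasDerivAt (fun t : ℝ => π * t) π t := by
    simpa using (hasDerivAt_id t).const_mul π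
  have h2 : HasDerivAt (fun t : ℝ => Real.sin (π * t)) (Real.cos (π * t) * π) t :=
    (Real.hasDerivAt_sin (π * t)).comp t hlin
  have h3 : HasDerivAt (fun t : ℝ => Real.log (Real.sin (π * t)))
      ((Real.sin (π * t))⁻¹ * (Real.cos (π * t) * π)) t :=
    by have := (Real.hasDerivAt_log hs.ne').comp t h2; exact this
  have hlogC : HasDerivAt (fun t : ℝ => ((Real.log (Real.sin (π * t)) : ℝ) : ℂ))
      (((Real.sin (π * t))⁻¹ * (Real.cos (π * t) * π) : ℝ) : ℂ) t := h3.ofReal_comp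
  have hIdC : HasDerivAt (fun t : ℝ => (t : ℂ)) 1 t := by
    simpa using (hasDerivAt_id t).ofReal_comp
  have hA : HasDerivAt (fun t : ℝ => 1 - eC t) (-(2 * π * Complex.I * eC t)) t :=
    hE.const_sub 1
  have hB := (hA.mul hlogC).sub (hE.mul_const ((Real.log 2 : ℝ) : ℂ))
  have hC := (hB.const_mul (Complex.I / (2 * π))).add
    (hE.const_mul (Complex.I / (4 * π)))
  have hD := hC.sub (hIdC.div_const 2)
  refine hD.congr_deriv ?_
  symm
  rw [Real.log_mul two_ne_zero hs.ne']
  have hπ : ((π : ℝ) : ℂ) ≠ 0 := by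
    exact_mod_cast Complex.ofReal_ne_zero.mpr Real.pi_ne_zero
  have hsC : ((Real.sin (π * t) : ℝ) : ℂ) ≠ 0 := by
    exact_mod_cast Complex.ofReal_ne_zero.mpr hs.ne'
  have hsc : ((Real.sin (π * t) : ℝ) : ℂ) ^ 2 + ((Real.cos (π * t) : ℝ) : ℂ) ^ 2 = 1 := by
    have := Real.sin_sq_add_cos_sq (π * t)
    exact_mod_cast congrArg (fun x : ℝ => (x : ℂ)) this
  have hk : Complex.I * ((Real.cos (π * t) : ℝ) : ℂ) * (1 - eC t)
      = ((Real.sin (π * t) : ℝ) : ℂ) * (1 + eC t) := by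
    rw [eC_sq t]; exact key_ident _ _ hsc
  rw [Complex.ofReal_add]
  rw [show ((((Real.sin (π * t))⁻¹ * (Real.cos (π * t) * π) : ℝ)) : ℂ)
      = (((Real.sin (π * t) : ℝ) : ℂ))⁻¹ * (((Real.cos (π * t) : ℝ) : ℂ) * ((π : ℝ) : ℂ)) by
    push_cast; ring]
  exact expand_ident _ _ _ _ _ _ hπ hsC hk

lemma tendsto_aux {t0 : ℝ} (hsin : Real.sin (π * t0) = 0) {l : Filter ℝ}
    (hl : l ≤ 𝓝 t0) (hev : ∀ᶠ t in l, t ∈ Ioo (0:ℝ) 1) :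
    Tendsto (fun t => (1 - eC t) * ((Real.log (Real.sin (π * t)) : ℝ) : ℂ)) l (𝓝 0) := by
  have hc2 : Continuous fun t : ℝ => Real.sin (π * t) := by fun_prop
  have hcont : Continuous fun t : ℝ => 2 * |Real.sin (π * t) * Real.log (Real.sin (π * t))| :=
    continuous_const.mul (Real.continuous_mul_log.comp hc2).abs
  have hg : Tendsto (fun t : ℝ => 2 * |Real.sin (π * t) * Real.log (Real.sin (π * t))|) l (𝓝 0) :=
    (hcont.tendsto' t0 0 (by simp [hsin])).mono_left hl
  apply squeeze_zero_norm' _ hg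
  filter_upwards [hev] with t ht
  obtain ⟨ht0, ht1⟩ := ht
  have hspos : 0 < Real.sin (π * t) := Real.sin_pos_of_pos_of_lt_pi (by positivity)
    (by nlinarith [Real.pi_pos])
  have habs : ‖1 - eC t‖ = 2 * Real.sin (π * t) := by
    rw [norm_sub_rev]
    exact abs_eC_sub_one ht0.le ht1.le
  rw [norm_mul, habs, Complex.norm_real, Real.norm_eq_abs,
    abs_mul, abs_of_nonneg hspos.le]
  ring_nf
  exact le_refl _

lemma eC_zero : eC 0 = 1 := by
  rw [eC]; push_cast; rw [mul_zero, Complex.exp_zero]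

lemma tendsto_Gfun {t0 : ℝ} (hsin : Real.sin (π * t0) = 0) (hE1 : eC t0 = 1) {l : Filter ℝ}
    (hl : l ≤ 𝓝 t0) (hev : ∀ᶠ t in l, t ∈ Ioo (0:ℝ) 1) :
    Tendsto Gfun l (𝓝 (Complex.I / (2 * π) * (0 - 1 * (Real.log 2 : ℂ))
      + Complex.I / (4 * π) * 1 - (t0 : ℂ) / 2)) := by
  have T1 := tendsto_aux hsin hl hev
  have TE : Tendsto eC l (𝓝 1) := (continuous_eC.tendsto' t0 1 hE1).mono_left hl
  have T2 : Tendsto (fun t => eC t * ((Real.log 2 : ℝ) : ℂ)) l (𝓝 (1 * (Real.log 2 : ℝ))) :=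
    TE.mul_const _
  have T3 : Tendsto (fun t : ℝ => (t : ℂ) / 2) l (𝓝 ((t0 : ℂ) / 2)) :=
    ((Complex.continuous_ofReal.tendsto t0).mono_left hl).div_const 2
  exact (((T1.sub T2).const_mul _).add (TE.const_mul _)).sub T3

lemma core_integral :
    ∫ t in (0:ℝ)..1, ((Real.log (2 * Real.sin (π * t)) : ℝ) : ℂ) * eC t = -1/2 := by
  have hint : IntervalIntegrable (fun t => ((Real.log (2 * Real.sin (π * t)) : ℝ) : ℂ) * eC t)
      volume 0 1 := by
    have h1 : IntervalIntegrable (fun t => ((Real.log (2 * Real.sin (π * t)) : ℝ) : ℂ))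
        volume 0 1 := ⟨intInt_log_sin.1.ofReal, intInt_log_sin.2.ofReal⟩
    exact h1.mul_continuousOn continuous_eC.continuousOn
  have hderiv : ∀ t ∈ Ioo (0:ℝ) 1, HasDerivAt Gfun
      (((Real.log (2 * Real.sin (π * t)) : ℝ) : ℂ) * eC t) t := fun t ht =>
    Gfun_deriv ht.1 ht.2
  have hev0 : ∀ᶠ t in 𝓝[>] (0:ℝ), t ∈ Ioo (0:ℝ) 1 := by
    filter_upwards [Ioo_mem_nhdsGT_of_mem (left_mem_Ico.mpr zero_lt_one)] with t ht using ht
  have hev1 : ∀ᶠ t in 𝓝[<] (1:ℝ), t ∈ Ioo (0:ℝ) 1 := by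
    filter_upwards [Ioo_mem_nhdsLT_of_mem (right_mem_Ioc.mpr zero_lt_one)] with t ht using ht
  have ha := tendsto_Gfun (t0 := 0) (by simp) eC_zero nhdsWithin_le_nhds hev0
  have hb := tendsto_Gfun (t0 := 1) (by simp [Real.sin_pi]) eC_one nhdsWithin_le_nhds hev1
  rw [intervalIntegral.integral_eq_sub_of_hasDerivAt_of_tendsto zero_lt_one hderiv hint ha hb]
  push_cast
  ring

lemma periodic_intInt {f : ℝ → ℝ} (hf : Function.Periodic f 1)
    (h : IntervalIntegrable f volume 0 1) (a : ℝ) :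
    IntervalIntegrable f volume a (a + 1) := by
  have hn : ∀ n : ℤ, IntervalIntegrable f volume n ((n : ℝ) + 1) := by
    intro n
    have h2 := h.comp_sub_right (n : ℝ)
    have heq : (fun x => f (x - (n : ℝ))) = f := funext fun x => by
      simpa using hf.sub_int_mul_eq (x := x) n
    rw [heq, zero_add, add_comm] at h2
    exact h2
  have h1 : ((⌈a⌉ : ℝ)) - 1 ≤ a := by
    have := Int.ceil_lt_add_one a; linarith
  have h2 : a ≤ (⌈a⌉ : ℝ) := Int.le_ceil a
  have hA : IntervalIntegrable f volume a (⌈a⌉ : ℝ) := by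
    apply (hn (⌈a⌉ - 1)).mono_set
    rw [Set.uIcc_of_le h2, Set.uIcc_of_le (by push_cast; linarith)]
    apply Set.Icc_subset_Icc <;> push_cast <;> linarith
  have hB : IntervalIntegrable f volume (⌈a⌉ : ℝ) (a + 1) := by
    apply (hn ⌈a⌉).mono_set
    rw [Set.uIcc_of_le (by linarith : ((⌈a⌉ : ℝ)) ≤ a + 1), Set.uIcc_of_le (by linarith)]
    apply Set.Icc_subset_Icc <;> push_cast <;> linarith
  exact hA.trans hB

lemma abs_factor (φ t : ℝ) :
    ‖eC t - eC φ‖ = ‖eC (t - φ) - 1‖ := by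
  rw [eC_sub_eq, norm_mul, eC_abs, one_mul]

lemma intIntL (φ : ℝ) :
    IntervalIntegrable (fun t => Real.log (‖eC t - eC φ‖)) volume 0 1 := by
  set g : ℝ → ℝ := fun t => Real.log (‖eC t - 1‖) with hg
  have hgper : Function.Periodic g 1 := fun x => by
    simp only [hg, eC_periodic x]
  have hg01 : IntervalIntegrable g volume 0 1 := by
    rw [intervalIntegrable_iff_integrableOn_Ioc_of_le zero_le_one]
    have h0 := intInt_log_sin
    rw [intervalIntegrable_iff_integrableOn_Ioc_of_le zero_le_one] at h0
    apply h0.congr_fun _ measurableSet_Ioc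
    intro x hx
    show Real.log (2 * Real.sin (π * x)) = Real.log (‖eC x - 1‖)
    rw [abs_eC_sub_one hx.1.le hx.2]
  have hshift := (periodic_intInt hgper hg01 (-φ)).comp_sub_right φ
  have : (fun x => g (x - φ)) = fun t => Real.log (‖eC t - eC φ‖) :=
    funext fun x => by rw [hg]; rw [abs_factor]
  rw [this] at hshift
  norm_num at hshift
  exact hshift

lemma intB (φ : ℝ) :
    ∫ t in (0:ℝ)..1, ((Real.log (‖eC t - eC φ‖) : ℝ) : ℂ) * eC t
      = -eC φ / 2 := by
  set f : ℝ → ℂ := fun t => ((Real.log (‖eC t - eC φ‖) : ℝ) : ℂ) * eC t with hf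
  have hper : Function.Periodic f 1 := fun x => by
    simp only [hf, eC_periodic x]
  have h1 : ∫ t in (0:ℝ)..1, f t = ∫ t in φ..(φ + 1), f t := by
    have := hper.intervalIntegral_add_eq 0 φ
    simpa using this
  have h2 : ∫ t in φ..(φ + 1), f t
      = ∫ t in φ..(φ + 1), eC φ * (((Real.log (2 * Real.sin (π * (t - φ))) : ℝ) : ℂ) * eC (t - φ)) := by
    apply intervalIntegral.integral_congr
    intro t ht
    rw [Set.uIcc_of_le (by linarith)] at ht
    obtain ⟨ht0, ht1⟩ := ht
    rw [hf]
    simp only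
    rw [abs_eC_sub ht0 ht1]
    rw [show eC t = eC φ * eC (t - φ) by rw [← eC_add]; congr 1; ring]
    ring
  have h3 : ∫ t in φ..(φ + 1), (((Real.log (2 * Real.sin (π * (t - φ))) : ℝ) : ℂ) * eC (t - φ))
      = ∫ t in (0:ℝ)..1, ((Real.log (2 * Real.sin (π * t)) : ℝ) : ℂ) * eC t := by
    have := intervalIntegral.integral_comp_sub_right
      (a := φ) (b := φ + 1) (fun t => ((Real.log (2 * Real.sin (π * t)) : ℝ) : ℂ) * eC t) φ
    simpa using this
  rw [h1, h2, intervalIntegral.integral_const_mul, h3, core_integral]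
  ring

lemma bad_set_null (D : ℕ) (φ : Fin D → ℝ) :
    ∀ᵐ t : ℝ, ∀ j : Fin D, eC t ≠ eC (φ j) := by
  have h2πI : (2 * (π : ℂ) * Complex.I : ℂ) ≠ 0 := by
    simp [Real.pi_ne_zero, Complex.ofReal_ne_zero]
  have hsub : {t : ℝ | ∃ j : Fin D, eC t = eC (φ j)}
      ⊆ ⋃ j : Fin D, ⋃ n : ℤ, {φ j + n} := by
    rintro t ⟨j, hj⟩
    rw [eC, eC, Complex.exp_eq_exp_iff_exists_int] at hj
    obtain ⟨n, hn⟩ := hj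
    refine Set.mem_iUnion.mpr ⟨j, Set.mem_iUnion.mpr ⟨n, ?_⟩⟩
    have h2 : (2 * (π : ℂ) * Complex.I) * (t : ℂ)
        = (2 * (π : ℂ) * Complex.I) * ((φ j : ℂ) + (n : ℂ)) := by
      rw [hn]; push_cast; ring
    have h3 := mul_left_cancel₀ h2πI h2
    have h4 : (t : ℂ) = ((φ j + n : ℝ) : ℂ) := by rw [h3]; push_cast; ring
    simp [Complex.ofReal_inj.mp h4]
  have hnull : volume {t : ℝ | ∃ j : Fin D, eC t = eC (φ j)} = 0 :=
    measure_mono_null hsub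
      ((Set.countable_iUnion fun j => Set.countable_iUnion fun n =>
        Set.countable_singleton _).measure_zero volume)
  rw [ae_iff]
  convert hnull using 2
  ext t
  simp

open Real in
theorem sum_roots_bound (D : ℕ) (φ : Fin D → ℝ) :
    ‖∑ j, Complex.exp (2 * π * Complex.I * φ j)‖ ≤
      2 * ∫ θ in (0:ℝ)..1,
        |Real.log ‖∏ j, (Complex.exp (2 * π * Complex.I * θ)
          - Complex.exp (2 * π * Complex.I * φ j))‖| := by
  simp only [eC_def]
  have hIntC : ∀ j : Fin D, IntervalIntegrable
      (fun t => ((Real.log (‖eC t - eC (φ j)‖) : ℝ) : ℂ) * eC t) volume 0 1 := by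
    intro j
    have base : IntervalIntegrable
        (fun t => ((Real.log (‖eC t - eC (φ j)‖) : ℝ) : ℂ)) volume 0 1 :=
      ⟨(intIntL (φ j)).1.ofReal, (intIntL (φ j)).2.ofReal⟩
    exact base.mul_continuousOn continuous_eC.continuousOn
  have key : ∫ t in (0:ℝ)..1,
      ((∑ j, Real.log (‖eC t - eC (φ j)‖) : ℝ) : ℂ) * eC t
      = -(∑ j, eC (φ j)) / 2 := by
    have hfe : ∀ t ∈ Set.uIcc (0:ℝ) 1,
        ((∑ j, Real.log (‖eC t - eC (φ j)‖) : ℝ) : ℂ) * eC t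
        = ∑ j, ((Real.log (‖eC t - eC (φ j)‖) : ℝ) : ℂ) * eC t := by
      intro t _; push_cast; rw [Finset.sum_mul]
    rw [intervalIntegral.integral_congr hfe,
      intervalIntegral.integral_finset_sum (fun j _ => hIntC j)]
    simp_rw [intB]
    rw [← Finset.sum_div, ← Finset.sum_neg_distrib]
  have h2 : ‖∑ j, eC (φ j)‖ = 2 * ‖∫ t in (0:ℝ)..1,
      ((∑ j, Real.log (‖eC t - eC (φ j)‖) : ℝ) : ℂ) * eC t‖ := by
    rw [key]
    rw [norm_div, norm_neg]
    norm_num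
    ring
  have h3 : ‖∫ t in (0:ℝ)..1,
      ((∑ j, Real.log (‖eC t - eC (φ j)‖) : ℝ) : ℂ) * eC t‖
      ≤ ∫ t in (0:ℝ)..1, |∑ j, Real.log (‖eC t - eC (φ j)‖)| := by
    refine le_trans (intervalIntegral.norm_integral_le_integral_norm zero_le_one) ?_
    apply le_of_eq
    apply intervalIntegral.integral_congr
    intro t _
    simp only [norm_mul, Complex.norm_real, eC_abs, mul_one,
      Real.norm_eq_abs]
  have h4 : ∫ t in (0:ℝ)..1, |∑ j, Real.log (‖eC t - eC (φ j)‖)|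
      = ∫ θ in (0:ℝ)..1, |Real.log (‖∏ j, (eC θ - eC (φ j))‖)| := by
    apply intervalIntegral.integral_congr_ae
    filter_upwards [bad_set_null D φ] with t ht _
    congr 1
    rw [norm_prod]
    exact (Real.log_prod fun j _ =>
      (norm_ne_zero_iff.mpr (sub_ne_zero.mpr (ht j)))).symm
  rw [← h4]
  rw [h2]
  linarith
end

section
/- Let Q(z) = b_D ∏_{j=1}^{D}(z − r_j e^{2πiφ_j}) be a polynomial of degree D with complex coefficients, with b_D ≠ 0, all r_j > 0, and set b₀ = Q(0) (so b₀ ≠ 0). Define Q₁(z) = ∏_{j=1}^{D}(z − e^{2πiφ_j}). Then for every complex z with |z| = 1, |Q₁(z)| ≤ |Q(z)| / √(|b₀ · b_D|). -/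
lemma sqrt_prod_aux {ι : Type*} [DecidableEq ι] (s : Finset ι) (f : ι → ℝ) (h : ∀ i ∈ s, 0 ≤ f i) :
    Real.sqrt (∏ i ∈ s, f i) = ∏ i ∈ s, Real.sqrt (f i) := by
  induction s using Finset.induction with
  | empty => simp
  | insert _ _ hx ih =>
    rename_i a s'
    rw [Finset.prod_insert hx, Finset.prod_insert hx,
      Real.sqrt_mul (h a (Finset.mem_insert_self a s')),
      ih (fun i hi => h i (Finset.mem_insert_of_mem hi))]

lemma key_ineq (r : ℝ) (hr : 0 < r) (z w : ℂ) (hz : ‖z‖ = 1)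
    (hw : ‖w‖ = 1) :
    Real.sqrt r * ‖z - w‖ ≤ ‖z - r * w‖ := by
  have hz2 : Complex.normSq z = 1 := by rw [← Complex.sq_norm, hz]; norm_num
  have hw2 : Complex.normSq w = 1 := by rw [← Complex.sq_norm, hw]; norm_num
  rw [Complex.norm_def, Complex.norm_def, ← Real.sqrt_mul hr.le]
  apply Real.sqrt_le_sqrt
  have hre : (z * (starRingEnd ℂ) ((r : ℂ) * w)).re = r * (z * (starRingEnd ℂ) w).re := by
    rw [map_mul, Complex.conj_ofReal, show z * ((r:ℂ) * (starRingEnd ℂ) w)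
      = (r:ℂ) * (z * (starRingEnd ℂ) w) by ring, Complex.re_ofReal_mul]
  rw [Complex.normSq_sub, Complex.normSq_sub, Complex.normSq_mul,
    Complex.normSq_ofReal, hz2, hw2, hre]
  nlinarith [sq_nonneg (1 - r), (z * (starRingEnd ℂ) w).re]

open Real in
theorem unit_roots_poly_bound (D : ℕ) (bD : ℂ) (hbD : bD ≠ 0)
    (r : Fin D → ℝ) (hr : ∀ j, 0 < r j) (φ : Fin D → ℝ)
    (Q : ℂ → ℂ)
    (hQ : ∀ z, Q z = bD * ∏ j, (z - (r j : ℂ) * Complex.exp (2 * π * Complex.I * φ j)))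
    (Q₁ : ℂ → ℂ)
    (hQ₁ : ∀ z, Q₁ z = ∏ j, (z - Complex.exp (2 * π * Complex.I * φ j)))
    (z : ℂ) (hz : ‖z‖ = 1) :
    ‖Q₁ z‖ ≤ ‖Q z‖ / Real.sqrt ‖Q 0 * bD‖ := by
  set w : Fin D → ℂ := fun j => Complex.exp (2 * π * Complex.I * φ j) with hw
  have hwabs : ∀ j, ‖w j‖ = 1 := by
    intro j
    rw [hw]
    simp [Complex.norm_exp, Complex.mul_re, Complex.mul_im]
  have hQ0 : ‖Q 0 * bD‖ = ‖bD‖ ^ 2 * ∏ j, r j := by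
    rw [hQ 0, norm_mul, norm_mul, norm_prod]
    have : ∀ j ∈ Finset.univ, ‖0 - (r j : ℂ) * w j‖ = r j := by
      intro j _
      rw [zero_sub, norm_neg, norm_mul, hwabs, Complex.norm_real, Real.norm_eq_abs,
        abs_of_pos (hr j), mul_one]
    rw [Finset.prod_congr rfl this]
    ring
  have hsqrt : Real.sqrt ‖Q 0 * bD‖
      = ‖bD‖ * ∏ j, Real.sqrt (r j) := by
    rw [hQ0, Real.sqrt_mul (sq_nonneg _), Real.sqrt_sq (norm_nonneg _),
      sqrt_prod_aux _ _ (fun j _ => (hr j).le)]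
  have hpos : 0 < ‖bD‖ * ∏ j, Real.sqrt (r j) := by
    apply mul_pos (norm_pos_iff.mpr hbD)
    exact Finset.prod_pos fun j _ => Real.sqrt_pos.mpr (hr j)
  rw [hsqrt, le_div_iff₀ hpos, hQ z, hQ₁ z, norm_mul, norm_prod]
  have h1 : (∏ j, ‖z - w j‖) * (‖bD‖ * ∏ j, Real.sqrt (r j))
      = ‖bD‖ * ∏ j, (Real.sqrt (r j) * ‖z - w j‖) := by
    rw [Finset.prod_mul_distrib]; ring
  rw [h1]
  apply mul_le_mul_of_nonneg_left _ (norm_nonneg _)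
  rw [norm_prod]
  apply Finset.prod_le_prod
  · intro j _
    positivity
  · intro j _
    exact key_ineq (r j) (hr j) z (w j) hz (hwabs j)
end

section
/- Let S be a nonempty finite set, let θ : S → ℝ and s : S → ℝ be functions, let t, h, δ > 0 be reals with (1/|S|)·∑_{α∈S} |s(α)| ≤ 2h. Then |(1/|S|) ∑_{α∈S} e^{2πiθ(α)}(e^{2πi t·s(α)} − 1)| ≤ 4h/δ + 2π·t·δ. In particular, choosing δ = √(2h/(πt)), the left-hand side is at most 2√(8π·h·t). -/
open Real

lemma exp_I_sub_one_le (y : ℝ) : ‖(Complex.exp (y * Complex.I) - 1)‖ ≤ |y| := by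
  have h1 : ‖(Complex.exp (y * Complex.I) - 1)‖ ^ 2 = 2 - 2 * Real.cos y := by
    rw [Complex.sq_norm, Complex.exp_mul_I]
    simp [Complex.normSq_apply, Complex.cos_ofReal_re, Complex.sin_ofReal_re]
    nlinarith [Real.sin_sq_add_cos_sq y]
  have h2 : 1 - y ^ 2 / 2 ≤ Real.cos y := Real.one_sub_sq_div_two_le_cos
  nlinarith [norm_nonneg (Complex.exp (y * Complex.I) - 1), abs_nonneg y, sq_abs y]

lemma exp_I_sub_one_le_two (y : ℝ) : ‖(Complex.exp (y * Complex.I) - 1)‖ ≤ 2 := by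
  have := norm_sub_le (Complex.exp (y * Complex.I)) 1
  simp [Complex.norm_exp] at this ⊢
  linarith [norm_sub_le (Complex.exp (y * Complex.I)) 1]

open Real in
lemma radial_aux {α : Type*} (S : Finset α) (hS : S.Nonempty)
    (θ s : α → ℝ) (t h δ : ℝ) (ht : 0 < t) (hh : 0 < h) (hδ : 0 < δ)
    (havg : (1 / (S.card : ℝ)) * ∑ a ∈ S, |s a| ≤ 2 * h) :
    ‖((1 / (S.card : ℝ)) * ∑ a ∈ S,
        Complex.exp (2 * π * Complex.I * θ a) *
          (Complex.exp (2 * π * Complex.I * (t * s a)) - 1))‖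
      ≤ 4 * h / δ + 2 * π * t * δ := by
  have hπ := Real.pi_pos
  have hN : (0 : ℝ) < S.card := by exact_mod_cast Finset.card_pos.mpr hS
  have term : ∀ a ∈ S, ‖(Complex.exp (2 * π * Complex.I * θ a) *
      (Complex.exp (2 * π * Complex.I * (t * s a)) - 1))‖ ≤ 2 * π * t * δ + 2 * |s a| / δ := by
    intro a _
    have habs1 : ‖(Complex.exp (2 * π * Complex.I * θ a))‖ = 1 := by
      rw [Complex.norm_exp]
      simp [Complex.mul_re, Complex.mul_im]
    rw [norm_mul, habs1, one_mul]
    have hrw : (2 * π * Complex.I * (t * s a) : ℂ) = ((2 * π * (t * s a) : ℝ) : ℂ) * Complex.I := by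
      push_cast; ring
    rw [hrw]
    rcases le_or_gt |s a| δ with hc | hc
    · calc ‖(Complex.exp (((2 * π * (t * s a) : ℝ) : ℂ) * Complex.I) - 1)‖
          ≤ |2 * π * (t * s a)| := exp_I_sub_one_le _
        _ = 2 * π * t * |s a| := by
            rw [abs_mul, abs_mul, abs_mul, abs_of_pos two_pos, abs_of_pos hπ, abs_of_pos ht]
            ring
        _ ≤ 2 * π * t * δ := by gcongr
        _ ≤ 2 * π * t * δ + 2 * |s a| / δ := le_add_of_nonneg_right (by positivity)
    · calc ‖(Complex.exp (((2 * π * (t * s a) : ℝ) : ℂ) * Complex.I) - 1)‖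
          ≤ 2 := exp_I_sub_one_le_two _
        _ ≤ 2 * |s a| / δ := by rw [le_div_iff₀ hδ]; nlinarith
        _ ≤ 2 * π * t * δ + 2 * |s a| / δ := le_add_of_nonneg_left (by positivity)
  calc ‖((1 / (S.card : ℝ)) * ∑ a ∈ S,
        Complex.exp (2 * π * Complex.I * θ a) *
          (Complex.exp (2 * π * Complex.I * (t * s a)) - 1))‖
      = (1 / (S.card : ℝ)) * ‖(∑ a ∈ S,
          Complex.exp (2 * π * Complex.I * θ a) *
            (Complex.exp (2 * π * Complex.I * (t * s a)) - 1))‖ := by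
        rw [norm_mul]
        congr 1
        simp [norm_div]
    _ ≤ (1 / (S.card : ℝ)) * ∑ a ∈ S, (2 * π * t * δ + 2 * |s a| / δ) := by
        gcongr
        exact (norm_sum_le _ _).trans (Finset.sum_le_sum term)
    _ = 2 * π * t * δ + (2 / δ) * ((1 / (S.card : ℝ)) * ∑ a ∈ S, |s a|) := by
        rw [Finset.sum_add_distrib, Finset.sum_const, nsmul_eq_mul]
        have hh2 : ∑ x ∈ S, 2 * |s x| / δ = 2 / δ * ∑ x ∈ S, |s x| := by
          rw [Finset.mul_sum]; exact Finset.sum_congr rfl fun x _ => by ring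
        rw [hh2]; field_simp
    _ ≤ 2 * π * t * δ + (2 / δ) * (2 * h) := by
        gcongr
    _ = 4 * h / δ + 2 * π * t * δ := by field_simp; ring

open Real in
theorem radial_estimate {α : Type*} (S : Finset α) (hS : S.Nonempty)
    (θ s : α → ℝ) (t h δ : ℝ) (ht : 0 < t) (hh : 0 < h) (hδ : 0 < δ)
    (havg : (1 / (S.card : ℝ)) * ∑ a ∈ S, |s a| ≤ 2 * h) :
    ‖((1 / (S.card : ℝ)) * ∑ a ∈ S,
        Complex.exp (2 * π * Complex.I * θ a) *
          (Complex.exp (2 * π * Complex.I * (t * s a)) - 1))‖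
      ≤ 4 * h / δ + 2 * π * t * δ ∧
    ‖((1 / (S.card : ℝ)) * ∑ a ∈ S,
        Complex.exp (2 * π * Complex.I * θ a) *
          (Complex.exp (2 * π * Complex.I * (t * s a)) - 1))‖
      ≤ 2 * Real.sqrt (8 * π * h * t) := by
  have hπ := Real.pi_pos
  refine ⟨radial_aux S hS θ s t h δ ht hh hδ havg, ?_⟩
  have hq : (0:ℝ) < 2 * h / (π * t) := by positivity
  set d := Real.sqrt (2 * h / (π * t)) with hd
  have hd0 : 0 < d := Real.sqrt_pos.mpr hq
  have hdsq : d ^ 2 = 2 * h / (π * t) := Real.sq_sqrt hq.le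
  have key : 4 * h / d + 2 * π * t * d = 2 * Real.sqrt (8 * π * h * t) := by
    have h8 : Real.sqrt (8 * π * h * t) = 2 * π * t * d := by
      rw [hd, ← Real.sqrt_sq (by positivity : (0:ℝ) ≤ 2 * π * t),
        ← Real.sqrt_mul (by positivity)]
      congr 1
      field_simp
      ring
    have h4 : 4 * h / d = 2 * π * t * d := by
      rw [div_eq_iff hd0.ne']
      have : π * t * d ^ 2 = 2 * h := by
        rw [hdsq]; field_simp
      nlinarith
    rw [h8, h4]; ring
  rw [← key]
  exact radial_aux S hS θ s t h d ht hh hd0 havg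
end

section
/- Let N ≥ 1 and M ≥ 1 be integers, and for n = (n₁,…,n_N) ∈ ℤ^N set r(n) = ∏_{i=1}^{N} max(1, |n_i|), ‖n‖₁ = ∑_i |n_i|, and ‖n‖_∞ = max_i |n_i|. Then ∑_{n ∈ ℤ^N, 0 < ‖n‖_∞ ≤ M} √(‖n‖₁)/r(n) ≤ 4·N·√M·(3 + 2·log M)^{N−1}. -/
open Finset Real

lemma sqrt_add_le' (a b : ℝ) (ha : 0 ≤ a) (hb : 0 ≤ b) :
    Real.sqrt (a + b) ≤ Real.sqrt a + Real.sqrt b := by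
  have h : a + b ≤ (Real.sqrt a + Real.sqrt b) ^ 2 := by
    have := Real.sq_sqrt ha
    have := Real.sq_sqrt hb
    have := Real.sqrt_nonneg a
    have := Real.sqrt_nonneg b
    nlinarith [mul_nonneg (Real.sqrt_nonneg a) (Real.sqrt_nonneg b)]
  calc Real.sqrt (a + b) ≤ Real.sqrt ((Real.sqrt a + Real.sqrt b) ^ 2) :=
        Real.sqrt_le_sqrt h
    _ = Real.sqrt a + Real.sqrt b := by
        rw [Real.sqrt_sq (by positivity)]

lemma sqrt_sum_le {ι : Type*} [DecidableEq ι] (s : Finset ι) (f : ι → ℝ) (hf : ∀ i ∈ s, 0 ≤ f i) :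
    Real.sqrt (∑ i ∈ s, f i) ≤ ∑ i ∈ s, Real.sqrt (f i) := by
  induction s using Finset.induction_on with
  | empty => simp
  | insert _ _ hx ih =>
    rename_i a s
    rw [Finset.sum_insert hx, Finset.sum_insert hx]
    calc Real.sqrt (f a + ∑ i ∈ s, f i)
        ≤ Real.sqrt (f a) + Real.sqrt (∑ i ∈ s, f i) :=
          sqrt_add_le' _ _ (hf a (mem_insert_self a s))
            (Finset.sum_nonneg fun i hi => hf i (mem_insert_of_mem hi))
      _ ≤ _ := by
          gcongr
          exact ih fun i hi => hf i (mem_insert_of_mem hi)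

lemma sum_inv_sqrt_le (M : ℕ) :
    ∑ m ∈ Finset.Icc 1 M, 1 / Real.sqrt m ≤ 2 * Real.sqrt M := by
  induction M with
  | zero => simp
  | succ M ih =>
    rw [Finset.sum_Icc_succ_top (Nat.one_le_iff_ne_zero.mpr (Nat.succ_ne_zero M))]
    have ha : Real.sqrt M ^ 2 = M := Real.sq_sqrt (Nat.cast_nonneg M)
    have hb : Real.sqrt (M + 1 : ℕ) ^ 2 = (M + 1 : ℕ) :=
      Real.sq_sqrt (Nat.cast_nonneg _)
    have hb' : (0:ℝ) < Real.sqrt (M + 1 : ℕ) := by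
      apply Real.sqrt_pos.mpr; positivity
    have key : 1 / Real.sqrt (M + 1 : ℕ) ≤
        2 * Real.sqrt (M + 1 : ℕ) - 2 * Real.sqrt M := by
      rw [div_le_iff₀ hb']
      have hM1 : ((M + 1 : ℕ) : ℝ) = (M : ℝ) + 1 := by push_cast; ring
      nlinarith [Real.sqrt_nonneg M, sq_nonneg (Real.sqrt (M+1:ℕ) - Real.sqrt M)]
    linarith

lemma sum_inv_le (M : ℕ) :
    ∑ m ∈ Finset.Icc 1 M, 1 / (m : ℝ) ≤ 1 + Real.log M := by
  induction M with
  | zero => simp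
  | succ M ih =>
    rcases Nat.eq_zero_or_pos M with h | h
    · subst h; simp
    rw [Finset.sum_Icc_succ_top (Nat.one_le_iff_ne_zero.mpr (Nat.succ_ne_zero M))]
    have hM0 : (0:ℝ) < M := by exact_mod_cast h
    have hM1 : (0:ℝ) < (M:ℝ) + 1 := by linarith
    have hlog : 1 / ((M:ℝ) + 1) ≤ Real.log ((M:ℝ)+1) - Real.log M := by
      have := Real.log_le_sub_one_of_pos (x := (M:ℝ) / ((M:ℝ)+1)) (by positivity)
      rw [Real.log_div (ne_of_gt hM0) (ne_of_gt hM1)] at this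
      have : Real.log M - Real.log ((M:ℝ)+1) ≤ (M:ℝ)/((M:ℝ)+1) - 1 := this
      have h2 : (M:ℝ)/((M:ℝ)+1) - 1 = -(1/((M:ℝ)+1)) := by field_simp; ring
      linarith [this, h2 ▸ this]
    have hcast : ((M + 1 : ℕ) : ℝ) = (M:ℝ) + 1 := by push_cast; ring
    rw [hcast]
    linarith


lemma sum_Icc_cast (M : ℕ) (f : ℤ → ℝ) :
    ∑ k ∈ Finset.Icc (1:ℤ) (M:ℤ), f k = ∑ m ∈ Finset.Icc 1 M, f (m:ℤ) := by
  refine Finset.sum_nbij' (fun k => k.toNat) (fun m => (m:ℤ)) ?_ ?_ ?_ ?_ ?_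
  · intro a ha; simp only [Finset.mem_Icc] at *; omega
  · intro a ha; simp only [Finset.mem_Icc] at *; omega
  · intro a ha; simp only [Finset.mem_Icc] at ha; omega
  · intro a ha; simp only [Finset.mem_Icc] at ha; omega
  · intro a ha; simp only [Finset.mem_Icc] at ha
    congr 1; omega

lemma sum_Icc_even (M : ℕ) (f : ℤ → ℝ) (hf : ∀ k, f (-k) = f k) :
    ∑ k ∈ Finset.Icc (-(M:ℤ)) (M:ℤ), f k = f 0 + 2 * ∑ m ∈ Finset.Icc 1 M, f (m:ℤ) := by
  have h1 : Finset.Icc (-(M:ℤ)) (M:ℤ) =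
      Finset.Icc (-(M:ℤ)) (-1) ∪ Finset.Icc 0 (M:ℤ) := by
    ext k; simp only [Finset.mem_Icc, Finset.mem_union]; omega
  have hd : Disjoint (Finset.Icc (-(M:ℤ)) (-1)) (Finset.Icc 0 (M:ℤ)) := by
    simp only [Finset.disjoint_left, Finset.mem_Icc]; omega
  have hneg : ∑ k ∈ Finset.Icc (-(M:ℤ)) (-1), f k = ∑ k ∈ Finset.Icc (1:ℤ) (M:ℤ), f k := by
    refine Finset.sum_nbij' (fun k => -k) (fun k => -k) ?_ ?_ ?_ ?_ ?_
    · intro a ha; simp only [Finset.mem_Icc] at *; omega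
    · intro a ha; simp only [Finset.mem_Icc] at *; omega
    · intro a _; ring
    · intro a _; ring
    · intro a _; rw [hf]
  have h0 : Finset.Icc (0:ℤ) (M:ℤ) = insert 0 (Finset.Icc (1:ℤ) (M:ℤ)) := by
    ext k; simp only [Finset.mem_Icc, Finset.mem_insert]; omega
  have h0n : (0:ℤ) ∉ Finset.Icc (1:ℤ) (M:ℤ) := by simp
  rw [h1, Finset.sum_union hd, hneg, h0, Finset.sum_insert h0n, sum_Icc_cast]
  ring


lemma S0_nonneg (M : ℕ) : 0 ≤ ∑ k ∈ Finset.Icc (-(M:ℤ)) (M:ℤ), 1 / max 1 |(k:ℝ)| :=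
  Finset.sum_nonneg fun k _ => by positivity

lemma S0_le (M : ℕ) : ∑ k ∈ Finset.Icc (-(M:ℤ)) (M:ℤ), 1 / max 1 |(k:ℝ)| ≤
    3 + 2 * Real.log M := by
  rw [sum_Icc_even M (fun k => 1 / max 1 |(k:ℝ)|) (fun k => by push_cast; rw [abs_neg])]
  have h0 : (1:ℝ) / max 1 |((0:ℤ):ℝ)| = 1 := by norm_num
  have hsum : ∑ m ∈ Finset.Icc 1 M, 1 / max 1 |((m:ℤ):ℝ)| = ∑ m ∈ Finset.Icc 1 M, 1 / (m:ℝ) := by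
    refine Finset.sum_congr rfl fun m hm => ?_
    have h1 : (1:ℝ) ≤ (m:ℝ) := by
      have := (Finset.mem_Icc.mp hm).1; exact_mod_cast this
    rw [abs_of_nonneg (by push_cast; linarith), max_eq_right (by push_cast; linarith)]
    push_cast; ring
  rw [h0, hsum]
  have := sum_inv_le M
  linarith

lemma S1_le (M : ℕ) : ∑ k ∈ Finset.Icc (-(M:ℤ)) (M:ℤ), Real.sqrt |(k:ℝ)| / max 1 |(k:ℝ)| ≤
    4 * Real.sqrt M := by
  rw [sum_Icc_even M (fun k => Real.sqrt |(k:ℝ)| / max 1 |(k:ℝ)|)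
    (fun k => by push_cast; rw [abs_neg])]
  have h0 : Real.sqrt |((0:ℤ):ℝ)| / max 1 |((0:ℤ):ℝ)| = 0 := by norm_num
  have hsum : ∑ m ∈ Finset.Icc 1 M, Real.sqrt |((m:ℤ):ℝ)| / max 1 |((m:ℤ):ℝ)|
      = ∑ m ∈ Finset.Icc 1 M, 1 / Real.sqrt m := by
    refine Finset.sum_congr rfl fun m hm => ?_
    have h1 : (1:ℝ) ≤ (m:ℝ) := by
      have := (Finset.mem_Icc.mp hm).1; exact_mod_cast this
    have hm0 : (0:ℝ) < (m:ℝ) := by linarith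
    rw [abs_of_nonneg (by push_cast; linarith), max_eq_right (by push_cast; linarith)]
    push_cast
    rw [eq_div_iff (by positivity), div_mul_eq_mul_div, Real.mul_self_sqrt hm0.le,
      div_self hm0.ne']
  rw [h0, hsum]
  have := sum_inv_sqrt_le M
  linarith

theorem lattice_sum_bound (N M : ℕ) (hN : 1 ≤ N) (hM : 1 ≤ M) :
    ∑ n ∈ (Finset.Icc (fun _ : Fin N => -(M : ℤ)) (fun _ => (M : ℤ))).filter
        (fun n => n ≠ 0),
      Real.sqrt (∑ i, |(n i : ℝ)|) / ∏ i, max 1 |(n i : ℝ)|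
      ≤ 4 * N * Real.sqrt M * (3 + 2 * Real.log M) ^ (N - 1) := by
  classical
  set I : Finset ℤ := Finset.Icc (-(M:ℤ)) (M:ℤ) with hI
  set f0 : ℤ → ℝ := fun k => 1 / max 1 |(k:ℝ)| with hf0
  set f1 : ℤ → ℝ := fun k => Real.sqrt |(k:ℝ)| / max 1 |(k:ℝ)| with hf1
  have hB : (Finset.Icc (fun _ : Fin N => -(M:ℤ)) (fun _ => (M:ℤ)))
      = Fintype.piFinset (fun _ : Fin N => I) := by
    ext n
    simp [Finset.mem_Icc, Fintype.mem_piFinset, Pi.le_def, forall_and, hI]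
  have hS0 : ∑ k ∈ I, f0 k ≤ 3 + 2 * Real.log M := S0_le M
  have hS0' : (0:ℝ) ≤ ∑ k ∈ I, f0 k := S0_nonneg M
  have hS1 : ∑ k ∈ I, f1 k ≤ 4 * Real.sqrt M := S1_le M
  have hlogM : 0 ≤ Real.log M := Real.log_nonneg (by exact_mod_cast hM)
  -- drop the filter
  have step1 : ∑ n ∈ (Finset.Icc (fun _ : Fin N => -(M : ℤ)) (fun _ => (M : ℤ))).filter
        (fun n => n ≠ 0),
      Real.sqrt (∑ i, |(n i : ℝ)|) / ∏ i, max 1 |(n i : ℝ)|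
      ≤ ∑ n ∈ Fintype.piFinset (fun _ : Fin N => I),
        Real.sqrt (∑ i, |(n i : ℝ)|) / ∏ i, max 1 |(n i : ℝ)| := by
    rw [← hB]
    refine Finset.sum_le_sum_of_subset_of_nonneg (Finset.filter_subset _ _) ?_
    intro n _ _
    have h1 : (0:ℝ) ≤ ∏ i, max 1 |(n i : ℝ)| :=
      Finset.prod_nonneg fun i _ => by positivity
    exact div_nonneg (Real.sqrt_nonneg _) h1
  -- pointwise bound by sum over coordinates
  have step2 : ∀ n : Fin N → ℤ,
      Real.sqrt (∑ i, |(n i : ℝ)|) / ∏ i, max 1 |(n i : ℝ)|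
      ≤ ∑ j : Fin N, ∏ i, (if i = j then f1 (n i) else f0 (n i)) := by
    intro n
    have hP : (0:ℝ) < ∏ i, max 1 |(n i : ℝ)| :=
      Finset.prod_pos fun i _ => lt_of_lt_of_le one_pos (le_max_left _ _)
    have h1 : Real.sqrt (∑ i, |(n i : ℝ)|) / ∏ i, max 1 |(n i : ℝ)|
        ≤ (∑ i, Real.sqrt |(n i : ℝ)|) / ∏ i, max 1 |(n i : ℝ)| := by
      gcongr
      exact sqrt_sum_le _ _ fun i _ => abs_nonneg _
    refine h1.trans (le_of_eq ?_)
    rw [Finset.sum_div]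
    refine Finset.sum_congr rfl fun j _ => ?_
    have hprod : ∏ i, (if i = j then f1 (n i) else f0 (n i))
        = f1 (n j) * ∏ i ∈ Finset.univ.erase j, f0 (n i) := by
      rw [← Finset.mul_prod_erase _ _ (Finset.mem_univ j), if_pos rfl]
      congr 1
      refine Finset.prod_congr rfl fun i hi => ?_
      rw [if_neg (Finset.mem_erase.mp hi).1]
    have hPsplit : ∏ i, max 1 |(n i : ℝ)|
        = max 1 |(n j : ℝ)| * ∏ i ∈ Finset.univ.erase j, max 1 |(n i : ℝ)| :=
      (Finset.mul_prod_erase _ _ (Finset.mem_univ j)).symm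
    have hQ : (0:ℝ) < ∏ i ∈ Finset.univ.erase j, max 1 |(n i : ℝ)| :=
      Finset.prod_pos fun i _ => lt_of_lt_of_le one_pos (le_max_left _ _)
    have hinv : ∏ i ∈ Finset.univ.erase j, f0 (n i)
        = (∏ i ∈ Finset.univ.erase j, max 1 |(n i : ℝ)|)⁻¹ := by
      rw [← Finset.prod_inv_distrib]
      exact Finset.prod_congr rfl fun i _ => one_div _
    rw [hprod, hinv, hPsplit, hf1]
    dsimp only
    have hA : (1 ⊔ |((n j : ℤ):ℝ)|) ≠ 0 := (lt_of_lt_of_le one_pos (le_max_left _ _)).ne'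
    field_simp
  have step3 : ∑ n ∈ Fintype.piFinset (fun _ : Fin N => I),
        Real.sqrt (∑ i, |(n i : ℝ)|) / ∏ i, max 1 |(n i : ℝ)|
      ≤ (N:ℝ) * ((4 * Real.sqrt M) * (3 + 2 * Real.log M) ^ (N - 1)) := by
    calc ∑ n ∈ Fintype.piFinset (fun _ : Fin N => I),
          Real.sqrt (∑ i, |(n i : ℝ)|) / ∏ i, max 1 |(n i : ℝ)|
        ≤ ∑ n ∈ Fintype.piFinset (fun _ : Fin N => I),
            ∑ j : Fin N, ∏ i, (if i = j then f1 (n i) else f0 (n i)) :=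
          Finset.sum_le_sum fun n _ => step2 n
      _ = ∑ j : Fin N, ∑ n ∈ Fintype.piFinset (fun _ : Fin N => I),
            ∏ i, (if i = j then f1 (n i) else f0 (n i)) := Finset.sum_comm
      _ = ∑ j : Fin N, ∏ i : Fin N, ∑ k ∈ I, (if i = j then f1 k else f0 k) := by
          refine Finset.sum_congr rfl fun j _ => ?_
          rw [Finset.prod_univ_sum]
      _ = ∑ j : Fin N, ∏ i : Fin N,
            (if i = j then ∑ k ∈ I, f1 k else ∑ k ∈ I, f0 k) := by
          refine Finset.sum_congr rfl fun j _ => Finset.prod_congr rfl fun i _ => ?_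
          by_cases h : i = j <;> simp [h]
      _ = ∑ j : Fin N, (∑ k ∈ I, f1 k) * (∑ k ∈ I, f0 k) ^ (N - 1) := by
          refine Finset.sum_congr rfl fun j _ => ?_
          rw [← Finset.mul_prod_erase _ _ (Finset.mem_univ j), if_pos rfl]
          congr 1
          rw [Finset.prod_congr rfl fun i hi => if_neg (Finset.mem_erase.mp hi).1,
            Finset.prod_const, Finset.card_erase_of_mem (Finset.mem_univ j),
            Finset.card_univ, Fintype.card_fin]
      _ = (N:ℝ) * ((∑ k ∈ I, f1 k) * (∑ k ∈ I, f0 k) ^ (N - 1)) := by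
          rw [Finset.sum_const, Finset.card_univ, Fintype.card_fin, nsmul_eq_mul]
      _ ≤ (N:ℝ) * ((4 * Real.sqrt M) * (3 + 2 * Real.log M) ^ (N - 1)) := by
          refine mul_le_mul_of_nonneg_left ?_ (Nat.cast_nonneg N)
          refine mul_le_mul hS1 (pow_le_pow_left₀ hS0' hS0 _) (pow_nonneg hS0' _)
            (by positivity)
  calc _ ≤ _ := step1
    _ ≤ (N:ℝ) * ((4 * Real.sqrt M) * (3 + 2 * Real.log M) ^ (N - 1)) := step3
    _ = 4 * N * Real.sqrt M * (3 + 2 * Real.log M) ^ (N - 1) := by ring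
end
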